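/- Let f ∈ L¹(ℝ) and let y ∈ ℝ be a Lebesgue point of f. Then the Poisson integral u(x₁, x₂) = ∫_ℝ (1/π)·x₂/((x₁−t)² + x₂²) f(t) dt converges to f(y) as (x₁,x₂) → (y,0) nontangentially, i.e., within any cone Γ_α(y) = {(x₁,x₂) : x₂ > 0, |x₁ − y| < α·x₂}, α > 0. -/

import Mathlib

open MeasureTheory Real Filter Set
open scoped ENNReal
set_option maxHeartbeats 1000000

noncomputable def pk (a b t : ℝ) : ℝ := 1 / π * b / ((a - t) ^ 2 + b ^ 2)

lemma pk_nonneg {a b : ℝ} (hb : 0 < b) (t : ℝ) : 0 ≤ pk a b t := by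
  unfold pk; positivity

lemma pk_le {a b : ℝ} (hb : 0 < b) (t : ℝ) : pk a b t ≤ 1 / (π * b) := by
  unfold pk
  rw [div_le_div_iff₀ (by positivity) (by positivity)]
  have h : b ^ 2 ≤ (a - t) ^ 2 + b ^ 2 := by nlinarith [sq_nonneg (a - t)]
  have hπ : 0 < π := pi_pos
  calc 1 / π * b * (π * b) = b ^ 2 := by field_simp
    _ ≤ (a - t) ^ 2 + b ^ 2 := h
    _ = ((a - t) ^ 2 + b ^ 2) * 1 := by ring
    _ ≤ 1 * ((a - t) ^ 2 + b ^ 2) := by ring_nf; exact le_rfl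

lemma pk_eq {a b : ℝ} (hb : 0 < b) (t : ℝ) :
    pk a b t = 1 / (π * b) * (1 + ((t - a) / b) ^ 2)⁻¹ := by
  unfold pk
  have hπ : 0 < π := pi_pos
  have h : (a - t) ^ 2 = (t - a) ^ 2 := by ring
  field_simp
  ring

lemma pk_cont {a b : ℝ} (hb : 0 < b) : Continuous (pk a b) := by
  unfold pk
  exact (continuous_const.mul continuous_const).div
    (((continuous_const.sub continuous_id).pow 2).add continuous_const)
    (fun t => by positivity)

lemma pk_integrable {a b : ℝ} (hb : 0 < b) : Integrable (pk a b) := by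
  have h1 : Integrable (fun x : ℝ => (1 + (x / b) ^ 2)⁻¹) :=
    integrable_inv_one_add_sq.comp_div hb.ne'
  have h2 : Integrable (fun t : ℝ => (1 + ((t - a) / b) ^ 2)⁻¹) := h1.comp_sub_right a
  have := h2.const_mul (1 / (π * b))
  exact this.congr (by filter_upwards with t using (pk_eq hb t).symm)

lemma pk_integral {a b : ℝ} (hb : 0 < b) : ∫ t, pk a b t = 1 := by
  have hπ : 0 < π := pi_pos
  calc ∫ t, pk a b t = ∫ t, 1 / (π * b) * (1 + ((t - a) / b) ^ 2)⁻¹ := by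
        congr 1; ext t; exact pk_eq hb t
    _ = 1 / (π * b) * ∫ t, (1 + ((t - a) / b) ^ 2)⁻¹ := integral_const_mul _ _
    _ = 1 / (π * b) * ∫ t, (1 + (t / b) ^ 2)⁻¹ := by
        rw [integral_sub_right_eq_self (fun t : ℝ => (1 + (t / b) ^ 2)⁻¹) a]
    _ = 1 / (π * b) * (b * π) := by
        rw [MeasureTheory.Measure.integral_comp_div (fun x : ℝ => (1 + x ^ 2)⁻¹) b,
          integral_univ_inv_one_add_sq, smul_eq_mul, abs_of_pos hb]
    _ = 1 := by field_simp

lemma arctan_le_self' {x : ℝ} (hx : 0 < x) : arctan x ≤ x := by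
  have h0 : 0 < arctan x := by
    have := Real.arctan_zero
    calc (0:ℝ) = arctan 0 := Real.arctan_zero.symm
      _ < arctan x := Real.arctan_strictMono hx
  have := Real.lt_tan h0 (arctan_lt_pi_div_two x)
  rw [Real.tan_arctan] at this
  linarith

lemma pk_cone {a b y t α : ℝ} (hb : 0 < b) (h : |a - y| ≤ α * b) :
    pk a b t ≤ (3 + 2 * α ^ 2) * pk y b t := by
  have h2 : (a - y) ^ 2 ≤ α ^ 2 * b ^ 2 := by
    have := pow_le_pow_left₀ (abs_nonneg (a - y)) h 2
    rw [sq_abs] at this; nlinarith [this]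
  have key : (y - t) ^ 2 + b ^ 2 ≤ (3 + 2 * α ^ 2) * ((a - t) ^ 2 + b ^ 2) := by
    nlinarith [sq_nonneg (a - t + (a - y)), sq_nonneg (a - t - (a - y)), sq_nonneg (a-t), sq_nonneg α, sq_nonneg (α*(a-t))]
  have hu : 0 < 1 / π * b := by positivity
  unfold pk
  rw [show (3 + 2 * α ^ 2) * (1 / π * b / ((y - t) ^ 2 + b ^ 2))
      = (3 + 2 * α ^ 2) * (1 / π * b) / ((y - t) ^ 2 + b ^ 2) from by ring,
    div_le_div_iff₀ (by positivity) (by positivity)]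
  nlinarith [mul_le_mul_of_nonneg_left key hu.le]

lemma pk_tail {y b δ : ℝ} (hb : 0 < b) (hδ : 0 < δ) :
    ∫ t in (Metric.closedBall y δ)ᶜ, pk y b t ≤ 2 / π * (b / δ) := by
  have hπ : 0 < π := pi_pos
  have hIcc : Metric.closedBall y δ = Icc (y - δ) (y + δ) := Real.closedBall_eq_Icc
  have hsplit := MeasureTheory.integral_add_compl
    (measurableSet_closedBall (x := y) (ε := δ)) (pk_integrable hb (a := y))
  have hIccval : ∫ t in Metric.closedBall y δ, pk y b t = 2 / π * arctan (δ / b) := by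
    rw [hIcc, MeasureTheory.integral_Icc_eq_integral_Ioc,
      ← intervalIntegral.integral_of_le (by linarith)]
    have : ∀ t, pk y b t = 1 / (π * b) * (1 + ((t - y) / b) ^ 2)⁻¹ := pk_eq hb
    rw [intervalIntegral.integral_congr (g := fun t => 1 / (π * b) * (1 + ((t - y) / b) ^ 2)⁻¹)
      (fun t _ => this t)]
    rw [intervalIntegral.integral_const_mul]
    have hc : ∫ x in (y-δ)..(y+δ), (1 + ((x - y) / b) ^ 2)⁻¹
        = ∫ x in (-δ)..δ, (1 + (x / b) ^ 2)⁻¹ := by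
      have := intervalIntegral.integral_comp_sub_right (a := y - δ) (b := y + δ)
        (fun x : ℝ => (1 + (x / b) ^ 2)⁻¹) y
      rw [show y - δ - y = -δ by ring, show y + δ - y = δ by ring] at this
      exact this
    have hd : ∫ x in (-δ)..δ, (1 + (x / b) ^ 2)⁻¹
        = b • ∫ x in (-δ/b)..(δ/b), (1 + x ^ 2)⁻¹ :=
      intervalIntegral.integral_comp_div (a := -δ) (b := δ)
        (c := b) (f := fun x : ℝ => (1 + x ^ 2)⁻¹) hb.ne'
    rw [hc, hd,
      integral_inv_one_add_sq, neg_div, Real.arctan_neg]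
    rw [smul_eq_mul]
    field_simp
    ring
  have : ∫ t in (Metric.closedBall y δ)ᶜ, pk y b t = 2 / π * (π / 2 - arctan (δ / b)) := by
    have h1 := pk_integral hb (a := y)
    rw [hIccval, h1] at hsplit
    have h2 : 2 / π * (π / 2 - arctan (δ / b)) = 1 - 2 / π * arctan (δ / b) := by
      field_simp
    linarith
  rw [this, ← Real.arctan_inv_of_pos (by positivity), show (δ/b)⁻¹ = b/δ by
    rw [inv_div]]
  have := arctan_le_self' (show 0 < b/δ by positivity)
  have h2π : 0 < 2 / π := by positivity
  nlinarith

lemma pk_layercake (μ : Measure ℝ) {y b ε : ℝ} (hb : 0 < b) (hε : 0 ≤ ε)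
    (H : ∀ r : ℝ, 0 < r → μ {t | |t - y| ≤ r} ≤ ENNReal.ofReal (ε * r)) :
    ∫⁻ t, ENNReal.ofReal (pk y b t) ∂μ ≤ ENNReal.ofReal (2 * ε / π) := by
  have hπ : 0 < π := pi_pos
  rw [lintegral_eq_lintegral_meas_le μ (Eventually.of_forall (pk_nonneg hb))
    ((pk_cont hb).measurable.aemeasurable)]
  set M : ℝ := 1 / (π * b) with hM
  have hM0 : 0 < M := by positivity
  rw [← Ioc_union_Ioi_eq_Ioi hM0.le,
    lintegral_union measurableSet_Ioi (Ioc_disjoint_Ioi le_rfl)]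
  have hzero : ∫⁻ u in Ioi M, μ {a | u ≤ pk y b a} ∂volume = 0 := by
    rw [setLIntegral_congr_fun measurableSet_Ioi
      (fun u hu => ?_), lintegral_zero]
    have : {a : ℝ | u ≤ pk y b a} = ∅ := by
      ext a
      simp only [mem_setOf_eq, mem_empty_iff_false, iff_false, not_le]
      exact lt_of_le_of_lt (pk_le hb a) hu
    rw [this, measure_empty]
  rw [hzero, add_zero]
  set c : ℝ := ε * Real.sqrt (b / π) with hc
  have hc0 : 0 ≤ c := by positivity
  have hbdd : ∀ u ∈ Ioc 0 M, μ {a | u ≤ pk y b a} ≤ ENNReal.ofReal (c * u ^ (-(1:ℝ)/2)) := by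
    intro u hu
    obtain ⟨hu0, huM⟩ := hu
    set r : ℝ := Real.sqrt (b / (π * u)) with hr
    have hr0 : 0 < r := by positivity
    have hsub : {a : ℝ | u ≤ pk y b a} ⊆ {t : ℝ | |t - y| ≤ r} := by
      intro a ha
      simp only [mem_setOf_eq] at ha ⊢
      have hd : 0 < (y - a) ^ 2 + b ^ 2 := by positivity
      have h1 : u * ((y - a) ^ 2 + b ^ 2) ≤ 1 / π * b := by
        rw [show pk y b a = 1 / π * b / ((y - a) ^ 2 + b ^ 2) from rfl] at ha
        calc u * ((y - a) ^ 2 + b ^ 2)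
            ≤ (1 / π * b / ((y - a) ^ 2 + b ^ 2)) * ((y - a) ^ 2 + b ^ 2) := by
              exact mul_le_mul_of_nonneg_right ha hd.le
          _ = 1 / π * b := by field_simp
      have h2 : (a - y) ^ 2 ≤ b / (π * u) := by
        have : (y - a) ^ 2 + b ^ 2 ≤ b / (π * u) := by
          rw [le_div_iff₀ (by positivity)]
          calc ((y - a) ^ 2 + b ^ 2) * (π * u) = (u * ((y - a) ^ 2 + b ^ 2)) * π := by ring
            _ ≤ (1 / π * b) * π := mul_le_mul_of_nonneg_right h1 hπ.le
            _ = b := by field_simp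
        nlinarith [sq_nonneg b, sq_nonneg (y - a), sq_nonneg (a - y)]
      calc |a - y| = Real.sqrt ((a - y) ^ 2) := (Real.sqrt_sq_eq_abs _).symm
        _ ≤ r := Real.sqrt_le_sqrt h2
    have hεr : ε * r = c * u ^ (-(1:ℝ)/2) := by
      rw [hc, hr, show b / (π * u) = b / π * (1 / u) by ring,
        Real.sqrt_mul (by positivity), one_div, Real.sqrt_inv,
        show (-(1:ℝ)/2) = -(1/2 : ℝ) by norm_num, Real.rpow_neg hu0.le,
        ← Real.sqrt_eq_rpow]
      ring
    calc μ {a : ℝ | u ≤ pk y b a} ≤ μ {t : ℝ | |t - y| ≤ r} := measure_mono hsub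
      _ ≤ ENNReal.ofReal (ε * r) := H r hr0
      _ = ENNReal.ofReal (c * u ^ (-(1:ℝ)/2)) := by rw [hεr]
  have hint : IntegrableOn (fun u : ℝ => c * u ^ (-(1:ℝ)/2)) (Ioc 0 M) := by
    have h1 : IntervalIntegrable (fun u : ℝ => u ^ (-(1:ℝ)/2)) volume 0 M := by
      apply intervalIntegral.intervalIntegrable_rpow'
      norm_num
    have := (intervalIntegrable_iff_integrableOn_Ioc_of_le hM0.le).mp h1
    exact this.const_mul c
  calc ∫⁻ u in Ioc 0 M, μ {a | u ≤ pk y b a} ∂volume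
      ≤ ∫⁻ u in Ioc 0 M, ENNReal.ofReal (c * u ^ (-(1:ℝ)/2)) ∂volume :=
        setLIntegral_mono (by fun_prop) hbdd
    _ = ENNReal.ofReal (∫ u in Ioc 0 M, c * u ^ (-(1:ℝ)/2)) := by
        rw [← ofReal_integral_eq_lintegral_ofReal hint]
        filter_upwards [self_mem_ae_restrict measurableSet_Ioc] with u hu
        have : (0:ℝ) < u := hu.1
        positivity
    _ ≤ ENNReal.ofReal (2 * ε / π) := by
        apply ENNReal.ofReal_le_ofReal
        rw [← intervalIntegral.integral_of_le hM0.le, intervalIntegral.integral_const_mul,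
          integral_rpow (Or.inl (by norm_num))]
        rw [Real.zero_rpow (by norm_num)]
        rw [show (-(1:ℝ)/2 + 1) = (1/2 : ℝ) by norm_num]
        rw [← Real.sqrt_eq_rpow]
        rw [hc, hM]
        rw [show ε * Real.sqrt (b/π) * ((Real.sqrt (1/(π*b)) - 0)/(1/2))
          = 2 * ε * (Real.sqrt (b/π) * Real.sqrt (1/(π*b))) by ring]
        rw [← Real.sqrt_mul (by positivity), show b/π * (1/(π*b)) = (1/π)^2 by field_simp,
          Real.sqrt_sq (by positivity)]
        apply le_of_eq; ring

lemma near_est {y b δ ε : ℝ} (hb : 0 < b) (hδ : 0 < δ) (hε : 0 ≤ ε)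
    {g : ℝ → ℝ} (hgm : Measurable g) (hg0 : ∀ t, 0 ≤ g t)
    (hloc : IntegrableOn g (Icc (y - δ) (y + δ)))
    (hG : ∀ s : ℝ, 0 < s → s ≤ δ → ∫ t in y - s..y + s, g t ≤ ε * s) :
    ∫ t in Metric.closedBall y δ, pk y b t * g t ≤ 2 * ε / π := by
  have hπ : 0 < π := pi_pos
  set S := Metric.closedBall y δ with hS
  have hSm : MeasurableSet S := measurableSet_closedBall
  set w : ℝ → ℝ≥0∞ := fun t => ENNReal.ofReal (g t) with hw
  have hwm : Measurable w := hgm.ennreal_ofReal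
  set μ : Measure ℝ := (volume.withDensity w).restrict S with hμ
  -- the measure bound
  have H : ∀ r : ℝ, 0 < r → μ {t | |t - y| ≤ r} ≤ ENNReal.ofReal (ε * r) := by
    intro r hr
    have hmb : MeasurableSet {t : ℝ | |t - y| ≤ r} := by
      have : {t : ℝ | |t - y| ≤ r} = Metric.closedBall y r := by
        ext t; simp [Metric.mem_closedBall, Real.dist_eq]
      rw [this]; exact measurableSet_closedBall
    set ρ : ℝ := min r δ with hρ
    have hρ0 : 0 < ρ := lt_min hr hδ
    have hρδ : ρ ≤ δ := min_le_right _ _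
    have hcap : {t : ℝ | |t - y| ≤ r} ∩ S = Icc (y - ρ) (y + ρ) := by
      rw [hS, Real.closedBall_eq_Icc]
      ext t
      simp only [mem_inter_iff, mem_setOf_eq, mem_Icc, abs_le]
      rw [hρ]
      rcases le_total r δ with h | h
      · rw [min_eq_left h]
        constructor
        · rintro ⟨⟨a1, a2⟩, _⟩; exact ⟨by linarith, by linarith⟩
        · rintro ⟨a1, a2⟩; exact ⟨⟨by linarith, by linarith⟩, by linarith, by linarith⟩
      · rw [min_eq_right h]
        constructor
        · rintro ⟨⟨a1, a2⟩, b1, b2⟩; exact ⟨b1, b2⟩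
        · rintro ⟨a1, a2⟩; exact ⟨⟨by linarith, by linarith⟩, by linarith, by linarith⟩
    rw [hμ, Measure.restrict_apply hmb, withDensity_apply _ (hmb.inter hSm), hcap]
    have hint2 : IntegrableOn g (Icc (y - ρ) (y + ρ)) :=
      hloc.mono_set (Icc_subset_Icc (by linarith) (by linarith))
    rw [← ofReal_integral_eq_lintegral_ofReal hint2
      (Eventually.of_forall (fun t => hg0 t))]
    apply ENNReal.ofReal_le_ofReal
    have : ∫ t in Icc (y - ρ) (y + ρ), g t = ∫ t in y - ρ..y + ρ, g t := by
      rw [MeasureTheory.integral_Icc_eq_integral_Ioc,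
        ← intervalIntegral.integral_of_le (by linarith)]
    rw [this]
    calc ∫ t in y - ρ..y + ρ, g t ≤ ε * ρ := hG ρ hρ0 hρδ
      _ ≤ ε * r := by apply mul_le_mul_of_nonneg_left (min_le_left _ _) hε
  -- rewrite the Bochner integral as a lintegral against μ
  have hIobound : ∫ t in S, pk y b t * g t
      ≤ (∫⁻ t, ENNReal.ofReal (pk y b t) ∂μ).toReal := by
    have hnn : 0 ≤ᵐ[volume.restrict S] fun t => pk y b t * g t :=
      Eventually.of_forall (fun t => mul_nonneg (pk_nonneg hb t) (hg0 t))
    have hmeas : AEStronglyMeasurable (fun t => pk y b t * g t) (volume.restrict S) :=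
      ((pk_cont hb).measurable.mul hgm).aestronglyMeasurable
    rw [integral_eq_lintegral_of_nonneg_ae hnn hmeas]
    apply ENNReal.toReal_mono
    · rw [hμ]
      refine ne_of_lt (lt_of_le_of_lt (pk_layercake _ hb hε H) ?_)
      exact ENNReal.ofReal_lt_top
    · rw [hμ, restrict_withDensity hSm,
        lintegral_withDensity_eq_lintegral_mul _ hwm
          ((pk_cont hb).measurable.ennreal_ofReal)]
      apply lintegral_mono
      intro t
      simp only [Pi.mul_apply, hw]
      rw [← ENNReal.ofReal_mul (hg0 t)]
      apply ENNReal.ofReal_le_ofReal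
      apply le_of_eq; ring
  calc ∫ t in S, pk y b t * g t ≤ (∫⁻ t, ENNReal.ofReal (pk y b t) ∂μ).toReal := hIobound
    _ ≤ 2 * ε / π := by
        apply ENNReal.toReal_le_of_le_ofReal (by positivity)
        exact pk_layercake _ hb hε H


/-- At every Lebesgue point `y` of `f ∈ L¹(ℝ)`, the Poisson integral of
`f` converges to `f(y)` nontangentially, i.e. within every cone
`Γ_α(y) = {(x₁,x₂) : x₂ > 0, |x₁−y| < α·x₂}`. -/
theorem poisson_integral_nontangential_convergence
    (f : ℝ → ℝ) (hf : Integrable f volume) (y : ℝ)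
    (hy : Tendsto (fun s : ℝ => (1 / (2 * s)) * ∫ t in y - s..y + s, |f t - f y|)
      (nhdsWithin 0 (Set.Ioi 0)) (nhds 0)) :
    ∀ α : ℝ, 0 < α →
      Tendsto (fun p : ℝ × ℝ => ∫ t, (1 / π) * p.2 / ((p.1 - t) ^ 2 + p.2 ^ 2) * f t)
        (nhdsWithin (y, 0) {p : ℝ × ℝ | 0 < p.2 ∧ |p.1 - y| < α * p.2})
        (nhds (f y)) := by
  intro α hα
  have hπ : 0 < π := pi_pos
  set C : ℝ := 3 + 2 * α ^ 2 with hCdef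
  have hC : 0 < C := by positivity
  -- measurable representative
  set f' : ℝ → ℝ := (hf.1.mk f) with hf'def
  have hf'm : Measurable f' := hf.1.stronglyMeasurable_mk.measurable
  have hae : f =ᵐ[volume] f' := hf.1.ae_eq_mk
  have hf' : Integrable f' volume := hf.congr hae
  set c : ℝ := f y with hcdef
  set g : ℝ → ℝ := fun t => |f' t - c| with hgdef
  have hgm : Measurable g := (hf'm.sub measurable_const).abs
  have hg0 : ∀ t, 0 ≤ g t := fun t => abs_nonneg _
  have hgae : (fun t => |f t - c|) =ᵐ[volume] g := by
    filter_upwards [hae] with t ht using by rw [hgdef]; simp [ht]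
  set Mf : ℝ := ∫ t, |f' t| with hMf
  have hMf0 : 0 ≤ Mf := integral_nonneg fun t => abs_nonneg _
  rw [Metric.tendsto_nhdsWithin_nhds]
  intro ε hε
  set ε₀ : ℝ := ε * π / (8 * C) with hε₀def
  have hε₀ : 0 < ε₀ := by positivity
  -- get δ from the Lebesgue point hypothesis
  obtain ⟨δ₁, hδ₁, hLeb⟩ := Metric.tendsto_nhdsWithin_nhds.1 hy (ε₀ / 2) (by positivity)
  set δ : ℝ := δ₁ / 2 with hδdef
  have hδ : 0 < δ := by positivity
  have hG : ∀ s : ℝ, 0 < s → s ≤ δ → ∫ t in y - s..y + s, g t ≤ ε₀ * s := by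
    intro s hs hsδ
    have hmem : s ∈ Ioi (0:ℝ) := hs
    have hdist : dist s 0 < δ₁ := by
      rw [Real.dist_eq, sub_zero, abs_of_pos hs]; linarith
    have := hLeb hmem hdist
    rw [Real.dist_eq, sub_zero] at this
    have hIeq : ∫ t in y - s..y + s, |f t - f y| = ∫ t in y - s..y + s, g t := by
      apply intervalIntegral.integral_congr_ae
      have := ae_restrict_of_ae (μ := volume) (s := Set.uIoc (y - s) (y + s)) hgae
      filter_upwards [hgae] with t ht
      intro _
      exact ht
    rw [hIeq] at this
    have habs := le_of_lt (lt_of_le_of_lt (le_abs_self _) this)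
    have h2s : (0:ℝ) < 2 * s := by linarith
    rw [div_mul_eq_mul_div, one_mul, div_le_iff₀ h2s] at habs
    calc ∫ t in y - s..y + s, g t ≤ ε₀ / 2 * (2 * s) := habs
      _ = ε₀ * s := by ring
  -- the constant K for the far part
  set K : ℝ := C * Mf / (π * δ ^ 2) + |c| * C * 2 / (π * δ) with hKdef
  have hK0 : 0 ≤ K := by positivity
  set Δ : ℝ := min δ (min 1 (ε / (4 * (K + 1)))) with hΔdef
  have hΔ : 0 < Δ := by
    apply lt_min hδ
    apply lt_min one_pos
    positivity
  refine ⟨Δ, hΔ, ?_⟩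
  rintro ⟨a, b⟩ hp hdist
  obtain ⟨hb, hcone⟩ := hp
  simp only at hb hcone ⊢
  have hbΔ : b < Δ := by
    have h1 : dist b (0:ℝ) ≤ dist ((a, b) : ℝ × ℝ) ((y, 0) : ℝ × ℝ) := by
      rw [Prod.dist_eq]
      exact le_max_right _ _
    rw [Real.dist_eq, sub_zero, abs_of_pos hb] at h1
    linarith
  have hbδ : b < δ := lt_of_lt_of_le hbΔ (min_le_left _ _)
  have hb1 : b < 1 := lt_of_lt_of_le hbΔ (le_trans (min_le_right _ _) (min_le_left _ _))
  have hbK : b < ε / (4 * (K + 1)) :=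
    lt_of_lt_of_le hbΔ (le_trans (min_le_right _ _) (min_le_right _ _))
  -- integrability facts
  have hpkf' : Integrable (fun t => pk a b t * f' t) := by
    apply hf'.bdd_mul (c := 1 / (π * b)) ((pk_cont hb).aestronglyMeasurable)
    exact Eventually.of_forall (fun t => by
      rw [Real.norm_eq_abs, abs_of_nonneg (pk_nonneg hb t)]; exact pk_le hb t)
  have hpkc : Integrable (fun t => pk a b t * c) := (pk_integrable hb).mul_const c
  have hpkg : Integrable (fun t => pk a b t * g t) := by
    have : Integrable (fun t => |pk a b t * f' t - pk a b t * c|) := (hpkf'.sub hpkc).abs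
    apply this.congr
    filter_upwards with t
    rw [hgdef, ← mul_sub, abs_mul, abs_of_nonneg (pk_nonneg hb t)]
  have hpkyg : Integrable (fun t => pk y b t * g t) := by
    have hpkf'y : Integrable (fun t => pk y b t * f' t) := by
      apply hf'.bdd_mul (c := 1 / (π * b)) ((pk_cont hb).aestronglyMeasurable)
      exact Eventually.of_forall (fun t => by
        rw [Real.norm_eq_abs, abs_of_nonneg (pk_nonneg hb t)]; exact pk_le hb t)
    have : Integrable (fun t => |pk y b t * f' t - pk y b t * c|) :=
      (hpkf'y.sub ((pk_integrable hb).mul_const c)).abs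
    apply this.congr
    filter_upwards with t
    rw [hgdef, ← mul_sub, abs_mul, abs_of_nonneg (pk_nonneg hb t)]
  -- the integral in the statement equals ∫ pk a b * f'
  have hueq : ∫ t, 1 / π * b / ((a - t) ^ 2 + b ^ 2) * f t = ∫ t, pk a b t * f' t := by
    apply integral_congr_ae
    filter_upwards [hae] with t ht
    rw [ht]; rfl
  -- main difference bound
  have hdiff : |(∫ t, pk a b t * f' t) - c| ≤ ∫ t, pk a b t * g t := by
    have h2 : ∫ t, pk a b t * c = c := by
      rw [integral_mul_const, pk_integral hb, one_mul]
    have h3 : ∫ t, pk a b t * (f' t - c)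
        = (∫ t, pk a b t * f' t) - ∫ t, pk a b t * c := by
      rw [← integral_sub hpkf' hpkc]
      apply integral_congr_ae
      filter_upwards with t
      ring
    have h1 : (∫ t, pk a b t * f' t) - c = ∫ t, pk a b t * (f' t - c) := by
      rw [h3, h2]
    rw [h1]
    calc |∫ t, pk a b t * (f' t - c)| ≤ ∫ t, |pk a b t * (f' t - c)| := by
          have hn := norm_integral_le_integral_norm (μ := volume)
            (f := fun t => pk a b t * (f' t - c))
          simp only [Real.norm_eq_abs] at hn
          exact hn
      _ = ∫ t, pk a b t * g t := by
          congr 1; ext t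
          rw [hgdef, abs_mul, abs_of_nonneg (pk_nonneg hb t)]
  -- split into near and far
  set S : Set ℝ := Metric.closedBall y δ with hSdef
  have hSm : MeasurableSet S := measurableSet_closedBall
  have hsplit : ∫ t, pk a b t * g t
      = (∫ t in S, pk a b t * g t) + ∫ t in Sᶜ, pk a b t * g t :=
    (integral_add_compl hSm hpkg).symm
  have hconele : |a - y| ≤ α * b := hcone.le
  -- near estimate
  have hnear : ∫ t in S, pk a b t * g t ≤ C * (2 * ε₀ / π) := by
    have hmono : ∫ t in S, pk a b t * g t ≤ ∫ t in S, C * (pk y b t * g t) := by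
      apply setIntegral_mono hpkg.integrableOn (hpkyg.const_mul C).integrableOn
      intro t
      calc pk a b t * g t ≤ (C * pk y b t) * g t :=
            mul_le_mul_of_nonneg_right (pk_cone hb hconele) (hg0 t)
        _ = C * (pk y b t * g t) := by ring
    have hloc : IntegrableOn g (Icc (y - δ) (y + δ)) := by
      have h1 : IntegrableOn f' (Icc (y - δ) (y + δ)) := hf'.integrableOn
      have h2 : IntegrableOn (fun _ : ℝ => c) (Icc (y - δ) (y + δ)) :=
        integrableOn_const measure_Icc_lt_top.ne
      exact (h1.sub h2).abs
    calc ∫ t in S, pk a b t * g t ≤ ∫ t in S, C * (pk y b t * g t) := hmono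
      _ = C * ∫ t in S, pk y b t * g t := integral_const_mul _ _
      _ ≤ C * (2 * ε₀ / π) := by
          apply mul_le_mul_of_nonneg_left _ hC.le
          exact near_est hb hδ hε₀.le hgm hg0 hloc hG
  -- far estimate
  have hfar : ∫ t in Sᶜ, pk a b t * g t ≤ K * b := by
    have hptw : ∀ t ∈ Sᶜ, pk a b t * g t
        ≤ (C * b / (π * δ ^ 2)) * |f' t| + |c| * (C * pk y b t) := by
      intro t ht
      have htS : δ < |t - y| := by
        simp only [hSdef, Metric.mem_closedBall, not_le, mem_compl_iff] at ht
        rwa [Real.dist_eq] at ht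
      have hyt : δ ^ 2 ≤ (y - t) ^ 2 := by
        have h1 : δ ≤ |t - y| := htS.le
        have := pow_le_pow_left₀ hδ.le h1 2
        rw [sq_abs] at this
        nlinarith [this]
      have hpkyb : pk y b t ≤ 1 / π * b / δ ^ 2 := by
        unfold pk
        apply div_le_div_of_nonneg_left (by positivity) (by positivity)
        nlinarith [sq_nonneg b]
      have hpkab : pk a b t ≤ C * pk y b t := pk_cone hb hconele
      have hgle : g t ≤ |f' t| + |c| := by
        rw [hgdef]
        exact (abs_sub _ _)
      have hpk0 : 0 ≤ pk a b t := pk_nonneg hb t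
      have hbd : pk a b t ≤ C * (1 / π * b / δ ^ 2) :=
        le_trans hpkab (mul_le_mul_of_nonneg_left hpkyb hC.le)
      calc pk a b t * g t ≤ pk a b t * (|f' t| + |c|) :=
            mul_le_mul_of_nonneg_left hgle hpk0
        _ = pk a b t * |f' t| + pk a b t * |c| := by ring
        _ ≤ (C * (1 / π * b / δ ^ 2)) * |f' t| + (C * pk y b t) * |c| := by
            apply add_le_add
            · exact mul_le_mul_of_nonneg_right hbd (abs_nonneg _)
            · exact mul_le_mul_of_nonneg_right hpkab (abs_nonneg _)
        _ = (C * b / (π * δ ^ 2)) * |f' t| + |c| * (C * pk y b t) := by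
            rw [show C * (1 / π * b / δ ^ 2) = C * b / (π * δ ^ 2) by field_simp]
            ring
    have hintrhs : IntegrableOn
        (fun t => (C * b / (π * δ ^ 2)) * |f' t| + |c| * (C * pk y b t)) Sᶜ := by
      apply Integrable.integrableOn
      exact (hf'.abs.const_mul _).add (((pk_integrable hb).const_mul C).const_mul _)
    calc ∫ t in Sᶜ, pk a b t * g t
        ≤ ∫ t in Sᶜ, ((C * b / (π * δ ^ 2)) * |f' t| + |c| * (C * pk y b t)) :=
          setIntegral_mono_on hpkg.integrableOn hintrhs hSm.compl hptw
      _ = (C * b / (π * δ ^ 2)) * (∫ t in Sᶜ, |f' t|)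
          + |c| * C * ∫ t in Sᶜ, pk y b t := by
          rw [integral_add ((hf'.abs.const_mul _).integrableOn)
            ((((pk_integrable hb).const_mul C).const_mul _).integrableOn),
            integral_const_mul, integral_const_mul, integral_const_mul]
          ring
      _ ≤ (C * b / (π * δ ^ 2)) * Mf + |c| * C * (2 / π * (b / δ)) := by
          apply add_le_add
          · apply mul_le_mul_of_nonneg_left _ (by positivity)
            rw [hMf]
            exact setIntegral_le_integral hf'.abs
              (Eventually.of_forall fun t => abs_nonneg _)
          · apply mul_le_mul_of_nonneg_left (pk_tail hb hδ) (by positivity)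
      _ = K * b := by rw [hKdef]; field_simp
  -- combine
  rw [Real.dist_eq, hueq]
  have hKb : K * b ≤ ε / 4 := by
    have h1 : K * b ≤ K * (ε / (4 * (K + 1))) :=
      mul_le_mul_of_nonneg_left hbK.le hK0
    have h2 : K * (ε / (4 * (K + 1))) ≤ ε / 4 := by
      rw [mul_div_assoc', div_le_div_iff₀ (by positivity) (by norm_num)]
      nlinarith [hε.le, hK0]
    linarith
  have hCe : C * (2 * ε₀ / π) = ε / 4 := by
    rw [hε₀def]; field_simp; ring
  calc |(∫ t, pk a b t * f' t) - c| ≤ ∫ t, pk a b t * g t := hdiff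
    _ = (∫ t in S, pk a b t * g t) + ∫ t in Sᶜ, pk a b t * g t := hsplit
    _ ≤ C * (2 * ε₀ / π) + K * b := add_le_add hnear hfar
    _ = ε / 4 + K * b := by rw [hCe]
    _ ≤ ε / 4 + ε / 4 := by linarith
    _ < ε := by linarith
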